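/- For every proper binary tree T with ℓ leaves, where ℓ ≥ 2 has binary power representation L = (n_1, n_2, …, n_k), it holds that R(T) ≤ R(T_L). That is, the tree T_L maximizes the security among all proper binary trees with ℓ leaves. -/

import Mathlib

/-- Proper binary trees: every internal vertex has exactly two children. -/
inductive BTree : Type
  | leaf : BTree
  | node : BTree → BTree → BTree
  deriving DecidableEq

namespace BTree

/-- The rank (protection number) of the root of a proper binary tree:
the minimum distance from the root to a leaf descendant. -/
def rank : BTree → ℕ
  | leaf => 0
  | node l r => min l.rank r.rank + 1

/-- The security of a proper binary tree: the sum of the ranks of all vertices. -/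
def security : BTree → ℕ
  | leaf => 0
  | node l r => (node l r).rank + l.security + r.security

/-- The number of leaves. -/
def leafCount : BTree → ℕ
  | leaf => 1
  | node l r => l.leafCount + r.leafCount

/-- The height: maximum distance from the root to a leaf. -/
def height : BTree → ℕ
  | leaf => 0
  | node l r => max l.height r.height + 1

/-- A tree is complete if all leaves are at the same depth. -/
def IsComplete : BTree → Prop
  | leaf => True
  | node l r => IsComplete l ∧ IsComplete r ∧ l.height = r.height

/-- The subtree at a given position (a list of directions from the root;
`false` = first child, `true` = second child), if the position exists. -/
def subtreeAt : BTree → List Bool → Option BTree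
  | t, [] => some t
  | leaf, _ :: _ => none
  | node l _, false :: p => subtreeAt l p
  | node _ r, true :: p => subtreeAt r p

/-- Replace the subtree at a given position by `s`. -/
def replaceAt : BTree → List Bool → BTree → BTree
  | _, [], s => s
  | leaf, _ :: _, _ => leaf
  | node l r, false :: p, s => node (replaceAt l p s) r
  | node l r, true :: p, s => node l (replaceAt r p s)

/-- The rank of the vertex at position `p` in `T` (rank of a vertex only depends
on the subtree consisting of the vertex and its descendants). -/
def rankAt (T : BTree) (p : List Bool) : ℕ := ((T.subtreeAt p).map rank).getD 0

/-- The vertex at position `p` in `T` is saturated: its subtree is complete, but the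
subtree of none of its (proper) ancestors is complete. -/
def Saturated (T : BTree) (p : List Bool) : Prop :=
  (∃ s, T.subtreeAt p = some s ∧ IsComplete s) ∧
  ∀ q s, q <+: p → q ≠ p → T.subtreeAt q = some s → ¬ IsComplete s

/-- The complete binary tree of height `m` (with `2 ^ m` leaves). -/
def completeTree : ℕ → BTree
  | 0 => leaf
  | m + 1 => node (completeTree m) (completeTree m)

/-- The tree `T_L` for `L = (n₁, …, n_k)`: a binary caterpillar whose spine vertices carry
complete binary trees with `2 ^ nᵢ` leaves. -/
def TL : List ℕ → BTree
  | [] => leaf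
  | n :: ns => ns.foldl (fun acc m => node acc (completeTree m)) (completeTree n)

/-- Helper for the almost complete tree: a complete binary tree of height `m`
whose leftmost `r` leaves each receive two leaf children. -/
def buildF : ℕ → ℕ → BTree
  | 0, r => if r = 0 then leaf else node leaf leaf
  | m + 1, r => node (buildF m (min r (2 ^ m))) (buildF m (r - 2 ^ m))

/-- The almost complete ("good") tree `F(ℓ)` on `ℓ` leaves. -/
def F (ℓ : ℕ) : BTree := buildF (Nat.log 2 ℓ) (ℓ - 2 ^ Nat.log 2 ℓ)

end BTree

namespace BTreeAux

def pc : ℕ → ℕ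
  | 0 => 0
  | n+1 => pc ((n+1)/2) + (n+1) % 2
decreasing_by omega

lemma pc_zero : pc 0 = 0 := by simp [pc]

lemma pc_eq (n : ℕ) (h : n ≠ 0) : pc n = pc (n/2) + n % 2 := by
  cases n with
  | zero => omega
  | succ m => rw [pc]

lemma pc_two_mul (n : ℕ) : pc (2*n) = pc n := by
  cases n with
  | zero => simp [pc_zero]
  | succ m =>
    have h1 : 2*(m+1)/2 = m+1 := by omega
    have h2 : 2*(m+1) % 2 = 0 := by omega
    rw [pc_eq _ (by omega), h1, h2]
    simp

lemma pc_two_mul_add_one (n : ℕ) : pc (2*n+1) = pc n + 1 := by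
  have h1 : (2*n+1)/2 = n := by omega
  have h2 : (2*n+1) % 2 = 1 := by omega
  rw [pc_eq _ (by omega), h1, h2]

lemma pc_one : pc 1 = 1 := by
  have := pc_two_mul_add_one 0
  simpa [pc_zero] using this

lemma pc_succ_le (n : ℕ) : pc (n+1) ≤ pc n + 1 := by
  induction n using Nat.strong_induction_on with
  | _ n IH =>
    rcases Nat.even_or_odd n with ⟨m, rfl⟩ | ⟨m, rfl⟩
    · rw [show m+m+1 = 2*m+1 by ring, show m+m = 2*m by ring,
        pc_two_mul_add_one, pc_two_mul]
    · rw [show 2*m+1+1 = 2*(m+1) by ring, pc_two_mul, pc_two_mul_add_one]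
      have := IH m (by omega)
      omega

lemma log2_two_mul (n : ℕ) (h : 1 ≤ n) : Nat.log 2 (2*n) = Nat.log 2 n + 1 := by
  apply Nat.log_eq_of_pow_le_of_lt_pow
  · rw [pow_succ]
    have := Nat.pow_log_le_self 2 (by omega : n ≠ 0)
    omega
  · have := Nat.lt_pow_succ_log_self (by norm_num : 1 < 2) n
    rw [pow_succ]
    omega

lemma log2_two_mul_add_one (n : ℕ) (h : 1 ≤ n) : Nat.log 2 (2*n+1) = Nat.log 2 n + 1 := by
  apply Nat.log_eq_of_pow_le_of_lt_pow
  · rw [pow_succ]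
    have := Nat.pow_log_le_self 2 (by omega : n ≠ 0)
    omega
  · have := Nat.lt_pow_succ_log_self (by norm_num : 1 < 2) n
    rw [pow_succ]
    omega

lemma key : ∀ n a b, a + b = n → 1 ≤ a → 1 ≤ b →
    Nat.log 2 (a+b) + pc (a+b) ≤ max (Nat.log 2 a) (Nat.log 2 b) + pc a + pc b := by
  intro n
  induction n using Nat.strong_induction_on with
  | _ n IH =>
  intro a b hab ha hb
  have HEO : ∀ x y, 1 ≤ x → 2*x + (2*y+1) = n →
      Nat.log 2 (2*x+(2*y+1)) + pc (2*x+(2*y+1))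
        ≤ max (Nat.log 2 (2*x)) (Nat.log 2 (2*y+1)) + pc (2*x) + pc (2*y+1) := by
    intro x y hx hn
    rw [show 2*x+(2*y+1) = 2*(x+y)+1 by ring, log2_two_mul_add_one (x+y) (by omega),
      pc_two_mul_add_one, log2_two_mul x hx, pc_two_mul, pc_two_mul_add_one]
    rcases Nat.eq_zero_or_pos y with rfl | hy
    · simp only [Nat.mul_zero, Nat.zero_add, Nat.add_zero, pc_zero, pc_one, Nat.log_one_right]
      omega
    · have h1 := IH (x+y) (by omega) x y rfl hx hy
      rw [log2_two_mul_add_one y hy]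
      omega
  rcases Nat.even_or_odd a with ⟨x, rfl⟩ | ⟨x, rfl⟩ <;>
    rcases Nat.even_or_odd b with ⟨y, rfl⟩ | ⟨y, rfl⟩
  · -- even, even
    rw [show x+x+(y+y) = 2*(x+y) by ring, show x+x = 2*x by ring, show y+y = 2*y by ring,
      log2_two_mul (x+y) (by omega), pc_two_mul, log2_two_mul x (by omega),
      log2_two_mul y (by omega), pc_two_mul, pc_two_mul]
    have h1 := IH (x+y) (by omega) x y rfl (by omega) (by omega)
    omega
  · -- even, odd
    rw [show x+x = 2*x by ring] at ha hab ⊢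
    exact HEO x y (by omega) (by omega)
  · -- odd, even
    rw [show y+y = 2*y by ring] at hb hab ⊢
    have h1 := HEO y x (by omega) (by omega)
    rw [show 2*y+(2*x+1) = 2*x+1+2*y by ring] at h1
    omega
  · -- odd, odd
    rcases Nat.eq_zero_or_pos x with rfl | hx <;> rcases Nat.eq_zero_or_pos y with rfl | hy
    · -- a = b = 1
      rw [show 2*0+1+(2*0+1) = 2*1 by ring, show (2*0+1 : ℕ) = 1 by ring,
        log2_two_mul 1 (by norm_num), pc_two_mul, pc_one, Nat.log_one_right]
      omega
    · -- a = 1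
      rw [show 2*0+1+(2*y+1) = 2*(y+1) by ring, show (2*0+1 : ℕ) = 1 by ring,
        log2_two_mul (y+1) (by omega), pc_two_mul, Nat.log_one_right, pc_one,
        log2_two_mul_add_one y hy, pc_two_mul_add_one]
      have h1 := IH (1+y) (by omega) 1 y rfl (by norm_num) hy
      rw [Nat.log_one_right, pc_one] at h1
      rw [show 1+y = y+1 by ring] at h1
      omega
    · -- b = 1
      rw [show 2*x+1+(2*0+1) = 2*(x+1) by ring, show (2*0+1 : ℕ) = 1 by ring,
        log2_two_mul (x+1) (by omega), pc_two_mul, Nat.log_one_right, pc_one,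
        log2_two_mul_add_one x hx, pc_two_mul_add_one]
      have h1 := IH (x+1) (by omega) x 1 rfl hx (by norm_num)
      rw [Nat.log_one_right, pc_one] at h1
      omega
    · rw [show 2*x+1+(2*y+1) = 2*(x+y+1) by ring, log2_two_mul (x+y+1) (by omega), pc_two_mul,
        log2_two_mul_add_one x hx, log2_two_mul_add_one y hy, pc_two_mul_add_one,
        pc_two_mul_add_one]
      have h1 := IH (x+(y+1)) (by omega) x (y+1) rfl hx (by omega)
      rw [show x+(y+1) = x+y+1 by ring] at h1
      have h2 := pc_succ_le y
      have h3 : Nat.log 2 (y+1) ≤ Nat.log 2 y + 1 := by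
        have := Nat.log_mono_right (show y+1 ≤ 2*y by omega) (b := 2)
        rw [log2_two_mul y hy] at this
        exact this
      omega

end BTreeAux

namespace BTree

lemma leafCount_pos (T : BTree) : 1 ≤ T.leafCount := by
  induction T with
  | leaf => simp [leafCount]
  | node l r ihl ihr => simp only [leafCount]; omega

lemma pow_rank_le (T : BTree) : 2 ^ T.rank ≤ T.leafCount := by
  induction T with
  | leaf => simp [rank, leafCount]
  | node l r ihl ihr =>
    simp only [rank, leafCount]
    have h1 : 2 ^ min l.rank r.rank ≤ 2 ^ l.rank :=
      Nat.pow_le_pow_right (by norm_num) (min_le_left _ _)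
    have h2 : 2 ^ min l.rank r.rank ≤ 2 ^ r.rank :=
      Nat.pow_le_pow_right (by norm_num) (min_le_right _ _)
    rw [pow_succ]
    omega

lemma rank_le_log (T : BTree) : T.rank ≤ Nat.log 2 T.leafCount :=
  Nat.le_log_of_pow_le (by norm_num) T.pow_rank_le

lemma secA (T : BTree) :
    T.security + Nat.log 2 T.leafCount + BTreeAux.pc T.leafCount + 1 ≤ 2 * T.leafCount := by
  induction T with
  | leaf => simp [security, leafCount, BTreeAux.pc_one, Nat.log_one_right]
  | node l r ihl ihr =>
    have ha := leafCount_pos l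
    have hb := leafCount_pos r
    have hk := BTreeAux.key (l.leafCount + r.leafCount) l.leafCount r.leafCount rfl ha hb
    have hrl := rank_le_log l
    have hrr := rank_le_log r
    simp only [security, leafCount, rank]
    omega

lemma rank_completeTree (m : ℕ) : (completeTree m).rank = m := by
  induction m with
  | zero => rfl
  | succ k ih => simp [completeTree, rank, ih]

lemma sec_completeTree (m : ℕ) : (completeTree m).security + m + 2 = 2^(m+1) := by
  induction m with
  | zero => simp [completeTree, security]
  | succ k ih =>
    simp only [completeTree, security, rank, rank_completeTree, min_self]
    have hp : (2:ℕ)^(k+1+1) = 2*2^(k+1) := by rw [pow_succ]; ring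
    omega

lemma fold_sec : ∀ (ns : List ℕ) (t : BTree), List.Chain (· > ·) t.rank ns →
    (List.foldl (fun acc m => node acc (completeTree m)) t ns).security + ns.length
      = t.security + (ns.map (fun m => 2^(m+1))).sum := by
  intro ns
  induction ns with
  | nil => intro t _; simp
  | cons m ns' ih =>
    intro t hch
    replace hch : t.rank > m ∧ List.Chain (· > ·) m ns' := List.isChain_cons_cons.mp hch
    obtain ⟨hgt, hch'⟩ := hch
    simp only [List.foldl_cons, List.map_cons, List.sum_cons, List.length_cons]
    have hrt' : (node t (completeTree m)).rank = m + 1 := by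
      simp only [rank, rank_completeTree]
      omega
    have hch'' : List.Chain (· > ·) (node t (completeTree m)).rank ns' := by
      rw [hrt']
      cases ns' with
      | nil => exact List.Chain.nil
      | cons c cs =>
        obtain ⟨h1, h2⟩ := List.isChain_cons_cons.mp hch'
        exact List.Chain.cons (by omega) h2
    have hih := ih (node t (completeTree m)) hch''
    have hsec : (node t (completeTree m)).security
        = (m+1) + t.security + (completeTree m).security := by
      simp only [security, rank, rank_completeTree]
      omega
    have hc := sec_completeTree m
    omega

lemma sum_lt : ∀ (ns : List ℕ) (n : ℕ), List.Chain (· > ·) n ns →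
    (ns.map (2 ^ ·)).sum < 2^n := by
  intro ns
  induction ns with
  | nil => intro n _; simpa using Nat.pos_pow_of_pos n (by norm_num)
  | cons m ns' ih =>
    intro n h
    replace h : n > m ∧ List.Chain (· > ·) m ns' := List.isChain_cons_cons.mp h
    simp only [List.map_cons, List.sum_cons]
    have h1 := ih m h.2
    have h2 : (2:ℕ)^(m+1) ≤ 2^n := Nat.pow_le_pow_right (by norm_num) (by omega)
    rw [pow_succ] at h2
    omega

lemma pc_pow_add : ∀ m r, r < 2^m → BTreeAux.pc (2^m + r) = BTreeAux.pc r + 1 := by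
  intro m
  induction m with
  | zero =>
    intro r hr
    have : r = 0 := by simpa using hr
    subst this
    simp [BTreeAux.pc_one, BTreeAux.pc_zero]
  | succ k ih =>
    intro r hr
    rcases Nat.even_or_odd r with ⟨s, rfl⟩ | ⟨s, rfl⟩
    · rw [show 2^(k+1) + (s+s) = 2*(2^k + s) by rw [pow_succ]; ring,
        BTreeAux.pc_two_mul, show s+s = 2*s by ring, BTreeAux.pc_two_mul,
        ih s (by rw [pow_succ] at hr; omega)]
    · rw [show 2^(k+1) + (2*s+1) = 2*(2^k + s)+1 by rw [pow_succ]; ring,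
        BTreeAux.pc_two_mul_add_one, BTreeAux.pc_two_mul_add_one,
        ih s (by rw [pow_succ] at hr; omega)]

lemma pc_sum : ∀ (L : List ℕ), L.Chain' (· > ·) →
    BTreeAux.pc ((L.map (2 ^ ·)).sum) = L.length := by
  intro L
  induction L with
  | nil => intro _; simp [BTreeAux.pc_zero]
  | cons n ns ih =>
    intro h
    have hch : List.Chain (· > ·) n ns := h
    simp only [List.map_cons, List.sum_cons, List.length_cons]
    rw [pc_pow_add n _ (sum_lt ns n hch), ih h.tail]

end BTree

open BTree in
/-- Theorem (optimality of `T_L`): for every proper binary tree `T` with `ℓ ≥ 2` leaves,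
where `ℓ` has binary power representation `L = (n₁, …, n_k)` (so `L` is strictly decreasing
and `ℓ = 2^{n₁} + ⋯ + 2^{n_k}`), we have `R(T) ≤ R(T_L)`. -/
theorem security_le_security_TL (ℓ : ℕ) (hℓ : 2 ≤ ℓ) (L : List ℕ)
    (hdec : L.Chain' (· > ·)) (hsum : (L.map (2 ^ ·)).sum = ℓ)
    (T : BTree) (hT : T.leafCount = ℓ) :
    T.security ≤ (TL L).security := by
  have hA := BTree.secA T
  rw [hT] at hA
  match L, hdec, hsum with
  | [], _, hsum =>
    simp at hsum
    omega
  | n :: ns, hdec, hsum =>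
  have hch : List.Chain (· > ·) n ns := hdec
  have hfold := BTree.fold_sec ns (completeTree n)
    (by rw [BTree.rank_completeTree]; exact hch)
  have hsum2 : ∀ (l : List ℕ), (l.map (fun m => 2^(m+1))).sum = 2 * (l.map (2 ^ ·)).sum := by
    intro l
    induction l with
    | nil => simp
    | cons c cs ihc =>
      simp only [List.map_cons, List.sum_cons, ihc]
      rw [pow_succ]
      ring
  have hcs := BTree.sec_completeTree n
  have hpc : BTreeAux.pc ℓ = ns.length + 1 := by
    have h := BTree.pc_sum (n :: ns) hdec
    rw [hsum] at h
    simpa using h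
  simp only [List.map_cons, List.sum_cons] at hsum
  have hlog : n ≤ Nat.log 2 ℓ :=
    Nat.le_log_of_pow_le (by norm_num) (by omega)
  have hTL : TL (n :: ns)
      = List.foldl (fun acc m => node acc (completeTree m)) (completeTree n) ns := rfl
  rw [hTL]
  have hs2 := hsum2 ns
  have hpow : (2:ℕ)^(n+1) = 2*2^n := by rw [pow_succ]; ring
  omega
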